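/- arXiv:1411.3892 — 2 statements merged into one kernel-verified Lean document; each statement's English description precedes it below -/
import Mathlib

section
/- Let (Σ, μ) be a probability space, f : Σ → Σ a bi-measurable invertible map preserving μ, with μ ergodic, and let I ⊆ Σ be measurable with μ(I) > 0. For n ≥ 1 set I_n = {x ∈ I : n_I(x) = n} and I_{n,k} = f^k(I_n) for 0 ≤ k ≤ n−1. Then the sets I_{n,k} (n ≥ 1, 0 ≤ k ≤ n−1) are pairwise disjoint up to μ-null sets and μ(⋃_{n≥1} ⋃_{k=0}^{n-1} I_{n,k}) = 1. -/
open MeasureTheory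

/-- The first return time to a set `A` under the map `f`:
`n_A(x) = inf {k ≥ 1 : f^k(x) ∈ A}` (with the convention `sInf ∅ = 0`). -/
noncomputable def retTime {X : Type*} (f : X → X) (A : Set X) (x : X) : ℕ :=
  sInf {k : ℕ | 1 ≤ k ∧ f^[k] x ∈ A}

/-- The level set `I_n = {x ∈ I : n_I(x) = n}` of the first return time. -/
noncomputable def retLevel {X : Type*} (f : X → X) (I : Set X) (n : ℕ) : Set X :=
  I ∩ {x | retTime f I x = n}

/-- If `1 ≤ j < retTime f I x` then `f^[j] x ∉ I`. -/
lemma retTime_not_mem {X : Type*} {f : X → X} {I : Set X} {x : X} {j : ℕ}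
    (h1 : 1 ≤ j) (h2 : j < retTime f I x) : f^[j] x ∉ I := by
  intro hj
  exact Nat.notMem_of_lt_sInf h2 ⟨h1, hj⟩

/-- For strictly different heights, tower levels are genuinely disjoint. -/
lemma tower_disjoint_aux {X : Type*} {f : X → X} (hf : Function.Injective f)
    {I : Set X} {n k m l : ℕ} (hlm : l < m) (hkl : k < l) :
    (f^[k] '' retLevel f I n) ∩ (f^[l] '' retLevel f I m) = ∅ := by
  ext x
  simp only [Set.mem_inter_iff, Set.mem_image, Set.mem_empty_iff_false, iff_false]
  rintro ⟨⟨a, ⟨haI, _⟩, hax⟩, ⟨b, ⟨hbI, hbm⟩, hbx⟩⟩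
  have hx : f^[k] a = f^[k] (f^[l - k] b) := by
    rw [← Function.iterate_add_apply, Nat.add_sub_cancel' hkl.le, hax, hbx]
  have hab : a = f^[l - k] b := (hf.iterate k) hx
  have h1 : 1 ≤ l - k := Nat.le_sub_of_add_le (by omega)
  have h2 : l - k < retTime f I b := by rw [hbm]; omega
  exact retTime_not_mem h1 h2 (hab ▸ haI)

/-- For an ergodic invertible bi-measurable measure preserving map `f` on a probability
space `(X, μ)` and a measurable set `I` with `μ(I) > 0`, the sets
`I_{n,k} = f^k(I_n)`, for `n ≥ 1` and `0 ≤ k ≤ n-1`, are pairwise disjoint up to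
`μ`-null sets and their union has full measure. -/
theorem kakutani_tower_full_measure {X : Type*} [MeasurableSpace X] [Nonempty X]
    (μ : Measure X) [IsProbabilityMeasure μ] (f : X → X) (herg : Ergodic f μ)
    (hbij : Function.Bijective f) (hinv : Measurable (Function.invFun f))
    (I : Set X) (hI : MeasurableSet I) (hIpos : 0 < μ I) :
    (∀ p q : ℕ × ℕ, 1 ≤ p.1 → p.2 < p.1 → 1 ≤ q.1 → q.2 < q.1 → p ≠ q →
      μ ((f^[p.2] '' retLevel f I p.1) ∩ (f^[q.2] '' retLevel f I q.1)) = 0) ∧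
    μ (⋃ n, ⋃ k, ⋃ (_ : 1 ≤ n ∧ k < n), f^[k] '' retLevel f I n) = 1 := by
  have hfmeas : Measurable f := herg.toMeasurePreserving.measurable
  constructor
  · -- disjointness
    rintro ⟨n, k⟩ ⟨m, l⟩ hn hk hm hl hpq
    rcases lt_trichotomy k l with h | h | h
    · rw [tower_disjoint_aux hbij.1 hl h]; simp
    · -- k = l : then images of different levels, which are disjoint subsets of I-levels
      subst h
      have hnm : n ≠ m := fun hnm => hpq (by simp [hnm])
      have : (f^[k] '' retLevel f I n) ∩ (f^[k] '' retLevel f I m) = ∅ := by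
        rw [← Set.image_inter (hbij.1.iterate k)]
        have : retLevel f I n ∩ retLevel f I m = ∅ := by
          ext x
          simp only [retLevel, Set.mem_inter_iff, Set.mem_setOf_eq,
            Set.mem_empty_iff_false, iff_false]
          rintro ⟨⟨-, h1⟩, -, h2⟩
          exact hnm (h1 ▸ h2 ▸ rfl)
        rw [this]; simp
      rw [this]; simp
    · rw [Set.inter_comm, tower_disjoint_aux hbij.1 hk h]; simp
  · -- full measure
    set T := ⋃ n, ⋃ k, ⋃ (_ : 1 ≤ n ∧ k < n), f^[k] '' retLevel f I n with hT
    -- A : points whose forward orbit visits I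
    set A := ⋃ j, ⋃ (_ : 1 ≤ j), f^[j] ⁻¹' I with hA
    have hAmeas : MeasurableSet A :=
      MeasurableSet.iUnion fun j => MeasurableSet.iUnion fun _ =>
        hI.preimage (hfmeas.iterate j)
    have hApre : f ⁻¹' A ⊆ A := by
      rintro x hx
      simp only [hA, Set.mem_iUnion, Set.mem_preimage] at hx ⊢
      obtain ⟨j, hj, hjx⟩ := hx
      exact ⟨j + 1, by omega, by rwa [Function.iterate_succ_apply]⟩
    have hA1 : μ A = 1 := by
      rcases herg.ae_empty_or_univ_of_preimage_ae_le hAmeas.nullMeasurableSet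
          hApre.eventuallyLE with h | h
      · exfalso
        have hsub : f ⁻¹' I ⊆ A := by
          intro x hx
          simp only [hA, Set.mem_iUnion, Set.mem_preimage]
          exact ⟨1, le_refl _, by simpa using hx⟩
        have : μ (f ⁻¹' I) ≤ μ A := measure_mono hsub
        rw [herg.toMeasurePreserving.measure_preimage hI.nullMeasurableSet] at this
        have h0 : μ A = 0 := by simpa using measure_congr h
        rw [h0] at this
        exact absurd this (by simpa using hIpos.ne')
      · simpa using measure_congr h
    -- B : forward images of I
    set B := ⋃ j, f^[j] '' I with hB
    have himg : ∀ (j : ℕ) (s : Set X), f^[j] '' s = (Function.invFun f)^[j] ⁻¹' s := by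
      intro j s
      exact congrFun (Set.image_eq_preimage_of_inverse
        ((Function.leftInverse_invFun hbij.1).iterate j)
        ((Function.rightInverse_invFun hbij.2).iterate j)) s
    have hBmeas : MeasurableSet B := by
      refine MeasurableSet.iUnion fun j => ?_
      rw [himg j I]
      exact hI.preimage (hinv.iterate j)
    have hBpre : B ⊆ f ⁻¹' B := by
      rintro x hx
      simp only [hB, Set.mem_iUnion, Set.mem_preimage] at hx ⊢
      obtain ⟨j, a, ha, hax⟩ := hx
      exact ⟨j + 1, a, ha, by rw [Function.iterate_succ_apply', hax]⟩
    have hB1 : μ B = 1 := by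
      rcases herg.ae_empty_or_univ_of_ae_le_preimage hBmeas.nullMeasurableSet
          hBpre.eventuallyLE with h | h
      · exfalso
        have hsub : I ⊆ B := by
          intro x hx
          simp only [hB, Set.mem_iUnion]
          exact ⟨0, x, hx, rfl⟩
        have : μ I ≤ μ B := measure_mono hsub
        have h0 : μ B = 0 := by simpa using measure_congr h
        rw [h0] at this
        exact absurd this (by simpa using hIpos.ne')
      · simpa using measure_congr h
    -- A ∩ B ⊆ T
    have hsub : A ∩ B ⊆ T := by
      rintro x ⟨hxA, hxB⟩
      simp only [hB, Set.mem_iUnion, Set.mem_image] at hxB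
      set S := {j : ℕ | ∃ a, a ∈ I ∧ f^[j] a = x} with hS
      have hSne : S.Nonempty := by
        obtain ⟨j, a, ha, hax⟩ := hxB
        exact ⟨j, a, ha, hax⟩
      set k := sInf S with hk
      obtain ⟨a, haI, hax⟩ := Nat.sInf_mem hSne
      simp only [hA, Set.mem_iUnion, Set.mem_preimage] at hxA
      obtain ⟨j, hj1, hjx⟩ := hxA
      have hSane : ({m : ℕ | 1 ≤ m ∧ f^[m] a ∈ I}).Nonempty := by
        refine ⟨j + k, by omega, ?_⟩
        rw [Function.iterate_add_apply, hax]
        exact hjx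
      have hmem := Nat.sInf_mem hSane
      set n := retTime f I a with hn
      obtain ⟨hn1, hfnI⟩ : 1 ≤ n ∧ f^[n] a ∈ I := hmem
      have hkn : k < n := by
        by_contra hcon
        push_neg at hcon
        have hkS : k - n ∈ S := by
          refine ⟨f^[n] a, hfnI, ?_⟩
          rw [← Function.iterate_add_apply, Nat.sub_add_cancel hcon, hax]
        have : k - n < sInf S := by
          rw [← hk]; omega
        exact Nat.notMem_of_lt_sInf this hkS
      simp only [hT, Set.mem_iUnion]
      exact ⟨n, k, ⟨hn1, hkn⟩, a, ⟨haI, rfl⟩, hax⟩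
    have h1 : μ (A ∩ B) = 1 := by
      have hc : μ ((A ∩ B)ᶜ) = 0 := by
        rw [Set.compl_inter]
        refine le_antisymm (le_trans (measure_union_le _ _) ?_) zero_le
        rw [prob_compl_eq_zero_iff hAmeas |>.mpr hA1,
          prob_compl_eq_zero_iff hBmeas |>.mpr hB1]
        simp
      exact (prob_compl_eq_zero_iff (hAmeas.inter hBmeas)).mp hc
    refine le_antisymm (prob_le_one) ?_
    calc (1 : ENNReal) = μ (A ∩ B) := h1.symm
      _ ≤ μ T := measure_mono hsub
end

section
/- Let (Σ, μ) be a probability space, f : Σ → Σ a bi-measurable invertible map preserving μ, with μ ergodic, and let τ ∈ L¹(μ) with τ > 0. Let I ⊆ Σ be measurable with μ(I) > 0 and let 0 ≤ t₁ < t₂ be real numbers with t₂ ≤ τ(x) for all x ∈ I. Define for (x,t) ∈ I × [t₁,t₂] the return time N(x,t) = τ^{n_I}(x) − t + t₁, where n_I(x) = inf{k ≥ 1 : f^k(x) ∈ I} and τ^{n_I}(x) = Σ_{k=0}^{n_I(x)-1} τ(f^k(x)). Then (1/(μ(I)(t₂−t₁))) ∫_I ∫_{t₁}^{t₂} N(x,t)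 dt dμ(x) = (t₂−t₁)/2 + (1/μ(I)) ∫_Σ (τ − (t₂−t₁)·χ_I) dμ, where χ_I is the indicator function of I. Equivalently, setting β = μ(I)(t₂−t₁)/∫_Σ τ dμ, the left-hand side equals (t₂−t₁)/2 + (1−β)·(1/μ(I))·∫_Σ τ dμ. -/
open MeasureTheory

open ENNReal

lemma retTime_eq_iff_pos {X : Type*} (f : X → X) (I : Set X) (x : X) {n : ℕ} (hn : 1 ≤ n) :
    retTime f I x = n ↔ (f^[n] x ∈ I ∧ ∀ j, 1 ≤ j → j < n → f^[j] x ∉ I) := by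
  constructor
  · intro h
    have hne : {k : ℕ | 1 ≤ k ∧ f^[k] x ∈ I}.Nonempty := by
      by_contra hc
      rw [Set.not_nonempty_iff_eq_empty] at hc
      simp [retTime, hc] at h; omega
    have hmem := Nat.sInf_mem hne
    rw [retTime] at h
    rw [h] at hmem
    refine ⟨hmem.2, fun j h1 h2 hj => ?_⟩
    have := Nat.sInf_le (s := {k : ℕ | 1 ≤ k ∧ f^[k] x ∈ I}) ⟨h1, hj⟩
    omega
  · rintro ⟨h1, h2⟩
    refine le_antisymm (Nat.sInf_le ⟨hn, h1⟩) ?_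
    by_contra hc
    push_neg at hc
    have hmem := Nat.sInf_mem (⟨n, hn, h1⟩ : {k : ℕ | 1 ≤ k ∧ f^[k] x ∈ I}.Nonempty)
    exact h2 _ hmem.1 hc hmem.2

lemma measurable_retTime {X : Type*} [MeasurableSpace X] {f : X → X} (hf : Measurable f)
    {I : Set X} (hI : MeasurableSet I) : Measurable (retTime f I) := by
  apply measurable_to_countable'
  intro n
  rcases Nat.eq_zero_or_pos n with rfl | hn
  · have : retTime f I ⁻¹' {0} = ⋂ j, ⋂ _ : 1 ≤ j, (f^[j] ⁻¹' I)ᶜ := by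
      ext x
      simp only [Set.mem_preimage, Set.mem_singleton_iff, Set.mem_iInter, Set.mem_compl_iff]
      rw [retTime, Nat.sInf_eq_zero, Set.eq_empty_iff_forall_notMem]
      constructor
      · rintro (⟨h, _⟩ | h)
        · omega
        · exact fun j hj hjI => h j ⟨hj, hjI⟩
      · intro h
        exact Or.inr fun k ⟨h1, h2⟩ => h k h1 h2
    rw [this]
    exact MeasurableSet.iInter fun j => MeasurableSet.iInter fun _ => ((hf.iterate j) hI).compl
  · have : retTime f I ⁻¹' {n} =
        (f^[n] ⁻¹' I) ∩ ⋂ j, ⋂ _ : 1 ≤ j, ⋂ _ : j < n, (f^[j] ⁻¹' I)ᶜ := by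
      ext x
      simp only [Set.mem_preimage, Set.mem_singleton_iff, Set.mem_inter_iff, Set.mem_iInter,
        Set.mem_compl_iff]
      rw [retTime_eq_iff_pos f I x hn]
    rw [this]
    exact ((hf.iterate n) hI).inter (MeasurableSet.iInter fun j => MeasurableSet.iInter fun _ =>
      MeasurableSet.iInter fun _ => ((hf.iterate j) hI).compl)


lemma kac_lintegral {X : Type*} [MeasurableSpace X] [Nonempty X]
    (μ : Measure X) [IsProbabilityMeasure μ] (f : X → X) (herg : Ergodic f μ)
    (hbij : Function.Bijective f) (hinv : Measurable (Function.invFun f))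
    (I : Set X) (hI : MeasurableSet I) (hIpos : 0 < μ I)
    (G : X → ℝ≥0∞) (hG : Measurable G) :
    ∫⁻ x in I, ∑ k ∈ Finset.range (retTime f I x), G (f^[k] x) ∂μ = ∫⁻ x, G x ∂μ := by
  set g := Function.invFun f with hg
  have hgf : Function.LeftInverse g f := Function.leftInverse_invFun hbij.1
  have hfg : Function.RightInverse g f := Function.rightInverse_invFun hbij.2
  have hfm : Measurable f := herg.measurable
  have hmp : ∀ k : ℕ, MeasurePreserving f^[k] μ μ := fun k => herg.toMeasurePreserving.iterate k
  -- the sets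
  set A : ℕ → Set X := fun k => I ∩ ⋂ j, ⋂ _ : 1 ≤ j, ⋂ _ : j ≤ k, (f^[j] ⁻¹' I)ᶜ with hA
  set E : ℕ → Set X := fun k => (g^[k] ⁻¹' I) ∩ ⋂ i, ⋂ _ : i < k, (g^[i] ⁻¹' I)ᶜ with hE
  have hAmem : ∀ k x, x ∈ A k ↔ x ∈ I ∧ ∀ j, 1 ≤ j → j ≤ k → f^[j] x ∉ I := by
    intro k x; simp [hA]
  have hEmem : ∀ k y, y ∈ E k ↔ g^[k] y ∈ I ∧ ∀ i, i < k → g^[i] y ∉ I := by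
    intro k y; simp [hE]
  have hAmeas : ∀ k, MeasurableSet (A k) := fun k =>
    hI.inter (MeasurableSet.iInter fun j => MeasurableSet.iInter fun _ =>
      MeasurableSet.iInter fun _ => ((hfm.iterate j) hI).compl)
  have hEmeas : ∀ k, MeasurableSet (E k) := fun k =>
    ((hinv.iterate k) hI).inter (MeasurableSet.iInter fun i =>
      MeasurableSet.iInter fun _ => ((hinv.iterate i) hI).compl)
  -- preimage identity
  have hgfk : ∀ (k : ℕ) x, g^[k] (f^[k] x) = x := fun k => (hgf.iterate k)
  have hpre : ∀ k, f^[k] ⁻¹' E k = A k := by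
    intro k
    ext x
    simp only [Set.mem_preimage, hEmem, hAmem]
    constructor
    · rintro ⟨h1, h2⟩
      rw [hgfk] at h1
      refine ⟨h1, fun j hj1 hjk hjI => ?_⟩
      have : g^[k - j] (f^[k] x) = f^[j] x := by
        have : f^[k] x = f^[k - j] (f^[j] x) := by
          rw [← Function.iterate_add_apply]; congr 1; omega
        rw [this, hgfk]
      exact h2 (k - j) (by omega) (by rw [this]; exact hjI)
    · rintro ⟨h1, h2⟩
      rw [hgfk]
      refine ⟨h1, fun i hik hiI => ?_⟩
      have : g^[i] (f^[k] x) = f^[k - i] x := by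
        have : f^[k] x = f^[i] (f^[k - i] x) := by
          rw [← Function.iterate_add_apply]; congr 1; omega
        rw [this, hgfk]
      exact h2 (k - i) (by omega) (by omega) (by rw [← this]; exact hiI)
  have hmeasAE : ∀ k, μ (A k) = μ (E k) := by
    intro k
    rw [← hpre k, (hmp k).measure_preimage (hEmeas k).nullMeasurableSet]
  -- disjointness
  have hdisj : Pairwise (Function.onFun Disjoint E) := by
    intro k m hkm
    rw [Function.onFun, Set.disjoint_left]
    intro y hyk hym
    rcases hkm.lt_or_gt with h | h
    · exact ((hEmem m y).mp hym).2 k h ((hEmem k y).mp hyk).1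
    · exact ((hEmem k y).mp hyk).2 m h ((hEmem m y).mp hym).1
  -- union
  set U : Set X := ⋃ k, E k with hU
  have hUmem : ∀ y, y ∈ U ↔ ∃ i, g^[i] y ∈ I := by
    intro y
    constructor
    · rintro ⟨_, ⟨k, rfl⟩, hy⟩
      exact ⟨k, ((hEmem k y).mp hy).1⟩
    · rintro ⟨i, hi⟩
      have hne : {i : ℕ | g^[i] y ∈ I}.Nonempty := ⟨i, hi⟩
      refine Set.mem_iUnion.mpr ⟨sInf {i : ℕ | g^[i] y ∈ I}, (hEmem _ y).mpr
        ⟨Nat.sInf_mem hne, fun i hik => Nat.notMem_of_lt_sInf hik⟩⟩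
  have hUmeas : MeasurableSet U := MeasurableSet.iUnion hEmeas
  -- U is a.e. univ
  have hUinv : U ⊆ f ⁻¹' U := by
    intro y hy
    rcases (hUmem y).mp hy with ⟨i, hi⟩
    refine (hUmem (f y)).mpr ⟨i + 1, ?_⟩
    rw [Function.iterate_succ_apply, hgf y]
    exact hi
  have hUuniv : U =ᵐ[μ] Set.univ := by
    rcases herg.ae_empty_or_univ_of_ae_le_preimage hUmeas.nullMeasurableSet
      (HasSubset.Subset.eventuallyLE hUinv) with h | h
    · exfalso
      have hIU : I ⊆ U := fun y hy => (hUmem y).mpr ⟨0, hy⟩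
      have : μ U = 0 := by
        have := measure_congr h; simpa using this
      exact absurd (le_antisymm ((measure_mono hIU).trans this.le) zero_le) hIpos.ne'
    · exact h
  have hμU : μ U = 1 := by
    have := measure_congr hUuniv; simpa using this
  -- sum of measures of E k
  have htsumE : ∑' k, μ (E k) = 1 := by
    rw [← measure_iUnion hdisj hEmeas, ← hU, hμU]
  -- the non-returning set is null
  have hEto0 : Filter.Tendsto (fun k => μ (E k)) Filter.atTop (nhds 0) :=
    ENNReal.tendsto_atTop_zero_of_tsum_ne_top (by rw [htsumE]; exact one_ne_top)
  set NR : Set X := I ∩ ⋂ j, ⋂ _ : 1 ≤ j, (f^[j] ⁻¹' I)ᶜ with hNR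
  have hNRsub : ∀ k, NR ⊆ A k := by
    intro k x hx
    rw [hAmem]
    refine ⟨hx.1, fun j hj _ => ?_⟩
    have := hx.2
    simp only [Set.mem_iInter, Set.mem_compl_iff, Set.mem_preimage] at this
    exact this j hj
  have hNRnull : μ NR = 0 := by
    refine le_antisymm (ge_of_tendsto' hEto0 fun k => ?_) zero_le
    rw [← hmeasAE k]
    exact measure_mono (hNRsub k)
  -- rewrite LHS integrand a.e.
  have hae : ∀ᵐ x ∂(μ.restrict I),
      (∑ k ∈ Finset.range (retTime f I x), G (f^[k] x)) =
        ∑' k, Set.indicator (A k) (fun x => G (f^[k] x)) x := by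
    have h1 : ∀ᵐ x ∂(μ.restrict I), x ∉ NR ∧ x ∈ I := by
      refine Filter.Eventually.and ?_ ?_
      · exact ae_restrict_of_ae (by
          rw [ae_iff]; simpa using hNRnull)
      · exact ae_restrict_mem hI
    filter_upwards [h1] with x hx
    obtain ⟨hxNR, hxI⟩ := hx
    -- x returns to I
    have hret : ∃ j, 1 ≤ j ∧ f^[j] x ∈ I := by
      by_contra hc
      push_neg at hc
      refine hxNR ⟨hxI, ?_⟩
      simp only [Set.mem_iInter, Set.mem_compl_iff, Set.mem_preimage]
      exact fun j hj => hc j hj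
    obtain ⟨j₀, hj₀⟩ := hret
    have hSne : {k : ℕ | 1 ≤ k ∧ f^[k] x ∈ I}.Nonempty := ⟨j₀, hj₀⟩
    set n := retTime f I x with hn
    have hnmem : n ∈ {k : ℕ | 1 ≤ k ∧ f^[k] x ∈ I} := Nat.sInf_mem hSne
    have hmemA : ∀ k, x ∈ A k ↔ k < n := by
      intro k
      rw [hAmem]
      constructor
      · rintro ⟨-, h2⟩
        by_contra hc
        push_neg at hc
        exact h2 n hnmem.1 hc hnmem.2
      · intro hkn
        refine ⟨hxI, fun j h1 h2 hjI => ?_⟩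
        have := Nat.sInf_le (s := {k : ℕ | 1 ≤ k ∧ f^[k] x ∈ I}) ⟨h1, hjI⟩
        rw [show sInf {k : ℕ | 1 ≤ k ∧ f^[k] x ∈ I} = n from rfl] at this
        omega
    rw [tsum_eq_sum (s := Finset.range n) (fun k hk => by
      rw [Set.indicator_of_notMem (fun h => hk (Finset.mem_range.mpr ((hmemA k).mp h)))])]
    exact Finset.sum_congr rfl fun k hk => by
      rw [Set.indicator_of_mem ((hmemA k).mpr (Finset.mem_range.mp hk))]
  rw [lintegral_congr_ae hae]
  -- swap sum and integral; compare with E k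
  have hmeas_ind : ∀ k, Measurable (Set.indicator (A k) (fun x => G (f^[k] x))) :=
    fun k => (hG.comp (hfm.iterate k)).indicator (hAmeas k)
  rw [lintegral_tsum (fun k => ((hmeas_ind k)).aemeasurable)]
  have hterm : ∀ k, ∫⁻ x in I, Set.indicator (A k) (fun x => G (f^[k] x)) x ∂μ
      = ∫⁻ y in E k, G y ∂μ := by
    intro k
    rw [lintegral_indicator (hAmeas k), Measure.restrict_restrict (hAmeas k),
      Set.inter_eq_self_of_subset_left (fun x hx => ((hAmem k x).mp hx).1), ← hpre k]
    calc ∫⁻ x in f^[k] ⁻¹' E k, G (f^[k] x) ∂μ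
        = ∫⁻ y in E k, G y ∂(Measure.map f^[k] μ) :=
          (setLIntegral_map (hEmeas k) hG (hfm.iterate k)).symm
      _ = ∫⁻ y in E k, G y ∂μ := by rw [(hmp k).map_eq]
  calc ∑' k, ∫⁻ x in I, Set.indicator (A k) (fun x => G (f^[k] x)) x ∂μ
      = ∑' k, ∫⁻ y in E k, G y ∂μ := by exact tsum_congr hterm
    _ = ∫⁻ y in U, G y ∂μ := (lintegral_iUnion hEmeas hdisj G).symm
    _ = ∫⁻ y, G y ∂μ := by
        rw [Measure.restrict_congr_set hUuniv, Measure.restrict_univ]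

lemma kac_integral {X : Type*} [MeasurableSpace X] [Nonempty X]
    (μ : Measure X) [IsProbabilityMeasure μ] (f : X → X) (herg : Ergodic f μ)
    (hbij : Function.Bijective f) (hinv : Measurable (Function.invFun f))
    (I : Set X) (hI : MeasurableSet I) (hIpos : 0 < μ I)
    (τ : X → ℝ) (hτm : Measurable τ) (hτpos : ∀ x, 0 < τ x) (hτint : Integrable τ μ) :
    Integrable (fun x => ∑ k ∈ Finset.range (retTime f I x), τ (f^[k] x)) (μ.restrict I) ∧
    ∫ x in I, (∑ k ∈ Finset.range (retTime f I x), τ (f^[k] x)) ∂μ = ∫ x, τ x ∂μ := by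
  have hfm : Measurable f := herg.measurable
  set H : X → ℝ≥0∞ := fun x => ∑ k ∈ Finset.range (retTime f I x), ENNReal.ofReal (τ (f^[k] x))
    with hHdef
  have hHmeas : Measurable H := by
    have ht : ∀ x, (∑' k : ℕ, Set.indicator {y | k < retTime f I y}
        (fun y => ENNReal.ofReal (τ (f^[k] y))) x) = H x := by
      intro x
      have h0 : ∀ k ∉ Finset.range (retTime f I x),
          Set.indicator {y | k < retTime f I y} (fun y => ENNReal.ofReal (τ (f^[k] y))) x = 0 :=
        fun k hk => Set.indicator_of_notMem (fun h : x ∈ {y | k < retTime f I y} => hk (Finset.mem_range.mpr h)) _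
      refine (tsum_eq_sum h0).trans ?_
      exact Finset.sum_congr rfl fun k hk =>
        Set.indicator_of_mem (show x ∈ {y | k < retTime f I y} from Finset.mem_range.mp hk) _
    rw [show H = fun x => ∑' k : ℕ, Set.indicator {y | k < retTime f I y}
        (fun y => ENNReal.ofReal (τ (f^[k] y))) x from funext fun x => (ht x).symm]
    exact Measurable.ennreal_tsum fun k =>
      (ENNReal.measurable_ofReal.comp (hτm.comp (hfm.iterate k))).indicator
        (measurable_retTime hfm hI (measurableSet_Ioi (a := k)))
  have hofF : ∀ x, ENNReal.ofReal (∑ k ∈ Finset.range (retTime f I x), τ (f^[k] x)) = H x :=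
    fun x => ENNReal.ofReal_sum_of_nonneg fun k _ => (hτpos _).le
  have hFH : ∀ x, (∑ k ∈ Finset.range (retTime f I x), τ (f^[k] x)) = (H x).toReal := by
    intro x
    rw [← hofF x, ENNReal.toReal_ofReal (Finset.sum_nonneg fun k _ => (hτpos _).le)]
  have hlin : ∫⁻ x in I, H x ∂μ = ∫⁻ x, ENNReal.ofReal (τ x) ∂μ :=
    kac_lintegral μ f herg hbij hinv I hI hIpos _ (ENNReal.measurable_ofReal.comp hτm)
  have hfin : ∫⁻ x, ENNReal.ofReal (τ x) ∂μ < ⊤ := by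
    have : ∀ x, ENNReal.ofReal (τ x) = (‖τ x‖₊ : ℝ≥0∞) := fun x =>
      (Real.enorm_eq_ofReal (hτpos x).le).symm
    simp_rw [this]
    exact hτint.2
  have hint : Integrable (fun x => ∑ k ∈ Finset.range (retTime f I x), τ (f^[k] x))
      (μ.restrict I) := by
    have := integrable_toReal_of_lintegral_ne_top (μ := μ.restrict I) (f := H)
      hHmeas.aemeasurable (by rw [hlin]; exact hfin.ne)
    exact this.congr (Filter.Eventually.of_forall fun x => (hFH x).symm)
  refine ⟨hint, ?_⟩
  rw [integral_eq_lintegral_of_nonneg_ae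
      (Filter.Eventually.of_forall fun x => Finset.sum_nonneg fun k _ => (hτpos _).le)
      (by
        have : Measurable fun x => ∑ k ∈ Finset.range (retTime f I x), τ (f^[k] x) := by
          have : (fun x => ∑ k ∈ Finset.range (retTime f I x), τ (f^[k] x))
              = fun x => (H x).toReal := funext hFH
          rw [this]; exact hHmeas.ennreal_toReal
        exact this.aestronglyMeasurable),
    integral_eq_lintegral_of_nonneg_ae (Filter.Eventually.of_forall fun x => (hτpos x).le)
      hτm.aestronglyMeasurable]
  congr 1
  simp_rw [hofF]
  exact hlin


/-- Kac's lemma for suspension flows over cylinders, in base coordinates: for the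
suspension flow over an ergodic invertible measure preserving map `f` of `(X, μ)` with
roof function `τ > 0`, and cylinder `A = I × [t₁,t₂]` (with `0 ≤ t₁ < t₂ ≤ τ` on `I`),
the mean return time `N(x,t) = τ^{n_I}(x) - t + t₁` with respect to the normalized
measure on the cylinder equals `(t₂-t₁)/2 + (1/μ(I)) ∫ (τ - (t₂-t₁)χ_I) dμ`, and also
equals `(t₂-t₁)/2 + (1-β)·(1/μ(I))·∫ τ dμ` with `β = μ(I)(t₂-t₁)/∫ τ dμ`. -/
theorem kac_suspension_cylinder {X : Type*} [MeasurableSpace X] [Nonempty X]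
    (μ : Measure X) [IsProbabilityMeasure μ] (f : X → X) (herg : Ergodic f μ)
    (hbij : Function.Bijective f) (hinv : Measurable (Function.invFun f))
    (τ : X → ℝ) (hτint : Integrable τ μ) (hτpos : ∀ x, 0 < τ x)
    (I : Set X) (hI : MeasurableSet I) (hIpos : 0 < μ I)
    (t₁ t₂ : ℝ) (ht₁ : 0 ≤ t₁) (ht : t₁ < t₂) (hroof : ∀ x ∈ I, t₂ ≤ τ x) :
    (1 / ((μ I).toReal * (t₂ - t₁))) *
        (∫ x in I, (∫ t in t₁..t₂,
          ((∑ k ∈ Finset.range (retTime f I x), τ (f^[k] x)) - t + t₁)) ∂μ)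
      = (t₂ - t₁) / 2 +
        (1 / (μ I).toReal) * ∫ x, (τ x - (t₂ - t₁) * I.indicator 1 x) ∂μ ∧
    (1 / ((μ I).toReal * (t₂ - t₁))) *
        (∫ x in I, (∫ t in t₁..t₂,
          ((∑ k ∈ Finset.range (retTime f I x), τ (f^[k] x)) - t + t₁)) ∂μ)
      = (t₂ - t₁) / 2 +
        (1 - (μ I).toReal * (t₂ - t₁) / ∫ x, τ x ∂μ) *
          ((1 / (μ I).toReal) * ∫ x, τ x ∂μ) := by
  classical
  -- a measurable, everywhere-positive representative of τ
  obtain ⟨τ₀, hτ₀sm, hτ₀ae⟩ := hτint.1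
  set σ : X → ℝ := fun x => if 0 < τ₀ x then τ₀ x else 1 with hσdef
  have hσmeas : Measurable σ :=
    Measurable.ite (measurableSet_lt measurable_const hτ₀sm.measurable)
      hτ₀sm.measurable measurable_const
  have hσpos : ∀ x, 0 < σ x := by
    intro x; by_cases h : 0 < τ₀ x <;> simp [hσdef, h]
  have hσae : σ =ᵐ[μ] τ := by
    filter_upwards [hτ₀ae] with x hx
    have : 0 < τ₀ x := by rw [← hx] at *; exact hτpos x
    simp [hσdef, this, hx]
  have hσint : Integrable σ μ := hτint.congr hσae.symm
  obtain ⟨hFint, hFeq⟩ :=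
    kac_integral μ f herg hbij hinv I hI hIpos σ hσmeas hσpos hσint
  -- a.e. the Birkhoff sums of τ and σ agree
  have hsumae : ∀ᵐ x ∂μ, (∑ k ∈ Finset.range (retTime f I x), τ (f^[k] x))
      = ∑ k ∈ Finset.range (retTime f I x), σ (f^[k] x) := by
    have hnull : μ {x | σ x ≠ τ x} = 0 := ae_iff.mp hσae
    have hiter : ∀ k : ℕ, μ (f^[k] ⁻¹' {x | σ x ≠ τ x}) = 0 := fun k =>
      (herg.toMeasurePreserving.iterate k).quasiMeasurePreserving.preimage_null hnull
    have hbig : μ (⋃ k, f^[k] ⁻¹' {x | σ x ≠ τ x}) = 0 := measure_iUnion_null hiter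
    rw [ae_iff]
    refine measure_mono_null ?_ hbig
    intro x hx
    simp only [Set.mem_setOf_eq] at hx
    by_contra hc
    simp only [Set.mem_iUnion, Set.mem_preimage, Set.mem_setOf_eq] at hc
    push_neg at hc
    exact hx (Finset.sum_congr rfl fun k _ => (hc k).symm)
  -- inner interval integral
  set Δ := t₂ - t₁ with hΔdef
  set c₀ := t₁ * Δ - (t₂ ^ 2 - t₁ ^ 2) / 2 with hc₀def
  have hinner : ∀ S : ℝ, (∫ t in t₁..t₂, (S - t + t₁)) = Δ * S + c₀ := by
    intro S
    have h1 : (fun t : ℝ => S - t + t₁) = fun t : ℝ => (S + t₁) - t := by funext t; ring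
    rw [h1, intervalIntegral.integral_sub intervalIntegrable_const intervalIntegral.intervalIntegrable_id,
      integral_id, intervalIntegral.integral_const, smul_eq_mul, hc₀def, hΔdef]
    ring
  set m := (μ I).toReal with hmdef
  have hm : 0 < m := ENNReal.toReal_pos hIpos.ne' (measure_ne_top μ I)
  set T := ∫ x, τ x ∂μ with hTdef
  have hTσ : ∫ x, σ x ∂μ = T := integral_congr_ae hσae
  have hT : 0 < T := by
    rw [hTdef, integral_pos_iff_support_of_nonneg_ae
      (Filter.Eventually.of_forall fun x => (hτpos x).le) hτint]
    have : Function.support τ = Set.univ := by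
      ext x; simp [Function.support, (hτpos x).ne']
    rw [this]
    simp
  -- the main computation of the double integral
  have key : (∫ x in I, (∫ t in t₁..t₂,
      ((∑ k ∈ Finset.range (retTime f I x), τ (f^[k] x)) - t + t₁)) ∂μ)
      = Δ * T + c₀ * m := by
    have h1 : ∀ᵐ x ∂(μ.restrict I), (∫ t in t₁..t₂,
        ((∑ k ∈ Finset.range (retTime f I x), τ (f^[k] x)) - t + t₁))
        = Δ * (∑ k ∈ Finset.range (retTime f I x), σ (f^[k] x)) + c₀ := by
      filter_upwards [ae_restrict_of_ae hsumae] with x hx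
      rw [hx] at *
      exact hinner _
    rw [integral_congr_ae h1,
      integral_add (hFint.const_mul Δ) (integrable_const c₀),
      integral_const_mul Δ _, hFeq, hTσ, integral_const, Measure.real, Measure.restrict_apply_univ,
      smul_eq_mul]
    ring
  have hRHS : ∫ x, (τ x - Δ * I.indicator 1 x) ∂μ = T - Δ * m := by
    have hind : Integrable (fun x => Δ * I.indicator 1 x) μ :=
      ((integrable_const (1 : ℝ)).indicator hI).const_mul Δ
    rw [integral_sub hτint hind, integral_const_mul Δ _, integral_indicator_one hI, Measure.real]
  have hΔ : 0 < Δ := by rw [hΔdef]; linarith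
  constructor
  · rw [key, hRHS]
    field_simp
    ring
  · rw [key]
    field_simp
    ring
end
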